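/- arXiv:2104.06972 — 2 statements merged into one kernel-verified Lean document; each statement's English description precedes it below -/
import Mathlib

section
/- Let t₀ > 0 and A = 2√t₀. If z : [t₀, T] → ℂ is differentiable, z(t₀) = 0, and z satisfies d(z⁴)/dt = −8(z² + 4t₀), and z admits an expansion z(t) = b·(t − t₀)^{1/4} + o((t − t₀)^{1/4}) as t → t₀⁺, then b⁴ = −32 t₀; in particular one may take b = e^{iπ/4}·2·(2t₀)^{1/4}, so the trace emanates from the origin tangentially to the ray of angle π/4. -/
open Complex Filter Topology Real

/-- Case (iii) of Theorem 1 (`A = 2√t₀`): matching the ansatz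
`z(t) = b·(t − t₀)^{1/4} + o((t − t₀)^{1/4})` into `(z⁴)' = −8(z² + 4t₀)` forces
`b⁴ = −32t₀`; in particular one may take `b = e^{iπ/4}·2·(2t₀)^{1/4}`. -/
theorem asymptotics_case_iii
    (t₀ T A : ℝ) (ht₀ : 0 < t₀) (hT : t₀ < T) (hA : A = 2 * Real.sqrt t₀)
    (z : ℝ → ℂ) (b : ℂ)
    (hz0 : z t₀ = 0)
    (hode : ∀ t ∈ Set.Ioo t₀ T,
      HasDerivAt (fun s => (z s) ^ 4) (-8 * ((z t) ^ 2 + 4 * (t₀ : ℂ))) t)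
    (hexp : (fun t : ℝ => z t - b * ((t - t₀) ^ ((1 : ℝ) / 4) : ℝ))
      =o[𝓝[>] t₀] (fun t : ℝ => (t - t₀) ^ ((1 : ℝ) / 4))) :
    b ^ 4 = -32 * (t₀ : ℂ) ∧
      (Complex.exp (Complex.I * (Real.pi / 4)) *
        (2 * ((2 * t₀) ^ ((1 : ℝ) / 4) : ℝ))) ^ 4 = -32 * (t₀ : ℂ) := by
  set r : ℝ → ℝ := fun t => (t - t₀) ^ ((1 : ℝ) / 4) with hr
  set w : ℝ → ℂ := fun s => (z s) ^ 4 with hw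
  -- r → 0 from the right
  have hr0 : Tendsto r (𝓝[>] t₀) (𝓝 0) := by
    have h1 : Tendsto (fun t : ℝ => t - t₀) (𝓝[>] t₀) (𝓝 0) := by
      have h0 : Tendsto (fun t : ℝ => t - t₀) (𝓝 t₀) (𝓝 (t₀ - t₀)) :=
        tendsto_id.sub tendsto_const_nhds
      rw [sub_self] at h0
      exact h0.mono_left nhdsWithin_le_nhds
    have h2 : ContinuousAt (fun x : ℝ => x ^ ((1:ℝ)/4)) 0 :=
      Real.continuousAt_rpow_const 0 ((1:ℝ)/4) (Or.inr (by norm_num))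
    have h3 := h2.tendsto.comp h1
    simp only [Function.comp_def] at h3
    rw [Real.zero_rpow (by norm_num : ((1:ℝ)/4) ≠ 0)] at h3
    exact h3
  -- eventually t > t₀ so r t > 0
  have hev : ∀ᶠ t in 𝓝[>] t₀, 0 < t - t₀ := by
    filter_upwards [self_mem_nhdsWithin] with t ht
    exact sub_pos.mpr ht
  have hrpos : ∀ᶠ t in 𝓝[>] t₀, 0 < r t := by
    filter_upwards [hev] with t ht
    exact Real.rpow_pos_of_pos ht _
  -- z → 0
  have hz_tendsto : Tendsto z (𝓝[>] t₀) (𝓝 0) := by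
    have h1 : Tendsto (fun t => z t - b * (r t : ℂ)) (𝓝[>] t₀) (𝓝 0) :=
      hexp.tendsto_zero_of_tendsto hr0
    have h2 : Tendsto (fun t => b * (r t : ℂ)) (𝓝[>] t₀) (𝓝 0) := by
      have : Tendsto (fun t => ((r t : ℝ) : ℂ)) (𝓝[>] t₀) (𝓝 0) := by
        have := (Complex.continuous_ofReal.tendsto 0).comp hr0
        simpa [Function.comp_def] using this
      simpa using this.const_mul b
    have := h1.add h2
    simpa using this
  -- limit 1 : z t / r t → b
  have hdiv : Tendsto (fun t => z t / (r t : ℂ)) (𝓝[>] t₀) (𝓝 b) := by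
    have hexp' : (fun t => z t - b * (r t : ℂ)) =o[𝓝[>] t₀] fun t => ((r t : ℝ) : ℂ) := by
      refine hexp.trans_isBigO ?_
      exact Asymptotics.isBigO_of_le _ (fun t => by simp)
    have h1 := hexp'.tendsto_div_nhds_zero
    have h2 : Tendsto (fun t => (z t - b * (r t : ℂ)) / (r t : ℂ) + b) (𝓝[>] t₀) (𝓝 (0 + b)) :=
      h1.add tendsto_const_nhds
    rw [zero_add] at h2
    refine h2.congr' ?_
    filter_upwards [hrpos] with t ht
    have hne : ((r t : ℝ) : ℂ) ≠ 0 := by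
      simpa using ne_of_gt ht
    field_simp
    ring
  have hlim1 : Tendsto (fun t => (z t / (r t : ℂ)) ^ 4) (𝓝[>] t₀) (𝓝 (b ^ 4)) := hdiv.pow 4
  -- the derivative version on Ici
  have hIoo : Set.Ioo t₀ T ∈ 𝓝[>] t₀ := Ioo_mem_nhdsGT_of_mem ⟨le_refl t₀, hT⟩
  have f_diff : DifferentiableOn ℝ w (Set.Ioo t₀ T) := fun t ht =>
    ((hode t ht).differentiableAt).differentiableWithinAt
  have f_lim : ContinuousWithinAt w (Set.Ioo t₀ T) t₀ := by
    have : Tendsto w (𝓝[>] t₀) (𝓝 0) := by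
      simpa using hz_tendsto.pow 4
    have h5 : Tendsto w (𝓝[Set.Ioo t₀ T] t₀) (𝓝 0) :=
      this.mono_left (nhdsWithin_mono t₀ Set.Ioo_subset_Ioi_self)
    simpa [ContinuousWithinAt, hw, hz0] using h5
  have f_lim' : Tendsto (fun t => deriv w t) (𝓝[>] t₀) (𝓝 (-32 * (t₀ : ℂ))) := by
    have h1 : Tendsto (fun t => -8 * ((z t) ^ 2 + 4 * (t₀ : ℂ))) (𝓝[>] t₀)
        (𝓝 (-8 * ((0 : ℂ) ^ 2 + 4 * (t₀ : ℂ)))) := by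
      exact (((hz_tendsto.pow 2).add tendsto_const_nhds).const_mul _)
    have h2 : (-8 : ℂ) * ((0 : ℂ) ^ 2 + 4 * (t₀ : ℂ)) = -32 * (t₀ : ℂ) := by ring
    rw [h2] at h1
    refine h1.congr' ?_
    filter_upwards [hIoo] with t ht
    exact ((hode t ht).deriv).symm
  have hderiv : HasDerivWithinAt w (-32 * (t₀ : ℂ)) (Set.Ici t₀) t₀ :=
    hasDerivWithinAt_Ici_of_tendsto_deriv f_diff f_lim hIoo f_lim'
  have hslope : Tendsto (slope w t₀) (𝓝[Set.Ici t₀ \ {t₀}] t₀) (𝓝 (-32 * (t₀ : ℂ))) :=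
    hasDerivWithinAt_iff_tendsto_slope.mp hderiv
  rw [Set.Ici_sdiff_left] at hslope
  -- identify slope with (z/r)^4
  have hb4 : b ^ 4 = -32 * (t₀ : ℂ) := by
    refine tendsto_nhds_unique (hlim1.congr' ?_) hslope
    filter_upwards [hev] with t ht
    have hr4 : (r t) ^ (4 : ℕ) = t - t₀ := by
      rw [hr]
      rw [← Real.rpow_natCast ((t - t₀) ^ ((1:ℝ)/4)) 4, ← Real.rpow_mul (le_of_lt ht)]
      norm_num
    have hne : ((t - t₀ : ℝ) : ℂ) ≠ 0 :=
      Complex.ofReal_ne_zero.mpr (ne_of_gt ht)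
    have : ((r t : ℝ) : ℂ) ^ (4 : ℕ) = ((t - t₀ : ℝ) : ℂ) := by
      rw [← Complex.ofReal_pow, hr4]
    rw [slope_def_module, hw]
    simp only [hz0]
    rw [div_pow, this, zero_pow (by norm_num : (4:ℕ) ≠ 0), sub_zero,
      Complex.real_smul, Complex.ofReal_inv]
    ring
  refine ⟨hb4, ?_⟩
  -- numerical identity
  have hc : ((2 * t₀) ^ ((1:ℝ)/4)) ^ (4 : ℕ) = 2 * t₀ := by
    rw [← Real.rpow_natCast ((2 * t₀) ^ ((1:ℝ)/4)) 4,
      ← Real.rpow_mul (by positivity : (0:ℝ) ≤ 2 * t₀)]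
    norm_num
  have hexp4 : Complex.exp (Complex.I * (Real.pi / 4)) ^ (4 : ℕ) = -1 := by
    rw [← Complex.exp_nat_mul]
    have h4 : ((4:ℕ) : ℂ) * (Complex.I * (((Real.pi : ℝ) : ℂ) / 4)) = (Real.pi : ℂ) * Complex.I := by
      push_cast; ring
    rw [h4, Complex.exp_pi_mul_I]
  rw [mul_pow, hexp4, mul_pow]
  rw [← Complex.ofReal_pow, hc]
  push_cast
  ring
end

section
/- Fix A > 0, t₀ > 0. Define for t ≥ t₀ the curve z(t) = [e^{i4π/(A²+4)} · 2^{8/(A²+4)} · A^{2A²/(A²+4)} · (t − t₀) − 4t₀]^{1/2}. Then z(t)² + 4t₀ = e^{i4π/(A²+4)} · 2^{8/(A²+4)} · A^{2A²/(A²+4)} · (t − t₀), and z(t) satisfies the algebraic trace equation 4(t − t₀)^{A²/4 + 1} = −(z(t)² + 4t₀)^{A²/4 + 1} · A^{−A²/2}, where the power of z² + 4t₀ is taken with the branch of log continuous along the ray e^{i4π/(A²+4)}·ℝ₊ (argument 4π/(A²+4)). -/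
open Complex Real

lemma trace_real_aux (A : ℝ) (hA : 0 < A) (C : ℝ)
    (hC : C = (2 : ℝ) ^ (8 / (A ^ 2 + 4)) * A ^ (2 * A ^ 2 / (A ^ 2 + 4)))
    (s : ℝ) (hs : 0 ≤ s) :
    4 * s ^ (A ^ 2 / 4 + 1) = (C * s) ^ (A ^ 2 / 4 + 1) * A ^ (-(A ^ 2) / 2) := by
  have h4 : (0:ℝ) < A ^ 2 + 4 := by positivity
  have hCpos : 0 < C := by rw [hC]; positivity
  have e1 : 8 / (A ^ 2 + 4) * (A ^ 2 / 4 + 1) = 2 := by field_simp; ring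
  have e2 : 2 * A ^ 2 / (A ^ 2 + 4) * (A ^ 2 / 4 + 1) = A ^ 2 / 2 := by
    field_simp; ring
  have h2two : (2:ℝ) ^ (2:ℝ) = 4 := by
    rw [show (2:ℝ) = ((2:ℕ):ℝ) by norm_num, Real.rpow_natCast]; norm_num
  rw [Real.mul_rpow hCpos.le hs, hC,
    Real.mul_rpow (by positivity) (by positivity),
    ← Real.rpow_mul (by norm_num : (0:ℝ) ≤ 2), ← Real.rpow_mul hA.le,
    e1, e2, h2two]
  have hAA : A ^ (A ^ 2 / 2) * A ^ (-(A ^ 2) / 2) = 1 := by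
    rw [← Real.rpow_add hA, show A ^ 2 / 2 + -(A ^ 2) / 2 = 0 by ring, Real.rpow_zero]
  linear_combination -4 * s ^ (A ^ 2 / 4 + 1) * hAA

/-- Theorem 2: the explicit trace
`z(t) = [e^{i4π/(A²+4)}·2^{8/(A²+4)}·A^{2A²/(A²+4)}·(t−t₀) − 4t₀]^{1/2}`
satisfies `z² + 4t₀ = e^{i4π/(A²+4)}·2^{8/(A²+4)}·A^{2A²/(A²+4)}·(t−t₀)` and the
algebraic trace equation `4(t−t₀)^{A²/4+1} = −(z²+4t₀)^{A²/4+1}·A^{−A²/2}`, the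
power of `z² + 4t₀` being taken with the branch of argument `4π/(A²+4)`. -/
theorem explicit_trace_theorem2
    (A t₀ : ℝ) (hA : 0 < A) (ht₀ : 0 < t₀)
    (C : ℝ) (hC : C = (2 : ℝ) ^ (8 / (A ^ 2 + 4)) * A ^ (2 * A ^ 2 / (A ^ 2 + 4)))
    (z : ℝ → ℂ)
    (hz : ∀ t : ℝ, z t =
      (Complex.exp (Complex.I * (4 * π / (A ^ 2 + 4))) * C * ((t : ℂ) - t₀) -
        4 * (t₀ : ℂ)) ^ ((1 : ℂ) / 2)) :
    ∀ t : ℝ, t₀ ≤ t →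
      (z t) ^ 2 + 4 * (t₀ : ℂ) =
        Complex.exp (Complex.I * (4 * π / (A ^ 2 + 4))) * C * ((t : ℂ) - t₀) ∧
      4 * (((t - t₀) ^ (A ^ 2 / 4 + 1) : ℝ) : ℂ) =
        -(((C * (t - t₀)) ^ (A ^ 2 / 4 + 1) : ℝ) *
            Complex.exp (Complex.I * ((A ^ 2 / 4 + 1) * (4 * π / (A ^ 2 + 4))))) *
          ((A ^ (-(A ^ 2) / 2) : ℝ) : ℂ) := by
  intro t ht
  constructor
  · rw [hz t]
    rw [show ((1:ℂ)/2) = (((2:ℕ)):ℂ)⁻¹ by norm_num,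
      Complex.cpow_nat_inv_pow _ (by norm_num : (2:ℕ) ≠ 0)]
    ring
  · have h4 : ((A:ℂ) ^ 2 + 4) ≠ 0 := by
      exact_mod_cast (show (A ^ 2 + 4 : ℝ) ≠ 0 by positivity)
    have hx : ((A:ℂ) ^ 2 / 4 + 1) * (4 * (π:ℂ) / ((A:ℂ) ^ 2 + 4)) = (π:ℂ) := by
      field_simp
    rw [hx, show Complex.I * (π:ℂ) = (π:ℂ) * Complex.I by ring, Complex.exp_pi_mul_I]
    have hr := trace_real_aux A hA C hC (t - t₀) (by linarith)
    rw [mul_neg_one, neg_neg]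
    exact_mod_cast hr
end
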